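/- arXiv:2407.16941 — 7 statements merged into one kernel-verified Lean document; each statement's English description precedes it below -/
import Mathlib

section
/- In an almost normal frame, the rather below relation coincides with the completely below relation: b ≺ a implies b ≪ a (and hence ≺ = ≪). -/
/-- `b` is completely below `a`: there is a `ℚ ∩ [0,1]`-indexed family interpolating
between `b` and `a` with respect to the rather below relation. -/
def CompletelyBelow {L : Type*} [Order.Frame L] (b a : L) : Prop :=
  ∃ c : ℚ → L, c 0 = b ∧ c 1 = a ∧
    ∀ p q : ℚ, p ∈ Set.Icc (0 : ℚ) 1 → q ∈ Set.Icc (0 : ℚ) 1 → p < q → (c p)ᶜ ⊔ c q = ⊤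

section CBaux

variable {L : Type*} [Order.Frame L]

private lemma rb_le {b a : L} (h : bᶜ ⊔ a = ⊤) : b ≤ a := by
  have : b = b ⊓ (bᶜ ⊔ a) := by rw [h, inf_top_eq]
  rw [inf_sup_left, inf_compl_self, bot_sup_eq] at this
  rw [this]; exact inf_le_right

private lemma rb_trans {b x a : L} (h1 : bᶜ ⊔ x = ⊤) (h2 : xᶜ ⊔ a = ⊤) : bᶜ ⊔ a = ⊤ :=
  top_le_iff.mp (h1 ▸ sup_le_sup_left (rb_le h2) _)

variable (hAN : ∀ a b : L, bᶜ ⊔ a = ⊤ → ∃ x : L, bᶜ ⊔ x = ⊤ ∧ xᶜ ⊔ a = ⊤)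

open Classical in

noncomputable def CBinterp (u v : L) : L :=
  if h : uᶜ ⊔ v = ⊤ then (hAN v u h).choose else u

lemma CBinterp_spec {u v : L} (h : uᶜ ⊔ v = ⊤) :
    uᶜ ⊔ CBinterp hAN u v = ⊤ ∧ (CBinterp hAN u v)ᶜ ⊔ v = ⊤ := by
  rw [CBinterp, dif_pos h]; exact (hAN v u h).choose_spec

noncomputable def eqQ : ℚ ≃ ℕ := Denumerable.eqv ℚ

noncomputable def eQ (m : ℕ) : ℚ := eqQ.symm m

noncomputable def eN (q : ℚ) : ℕ := eqQ q

lemma eQ_encode (q : ℚ) : eQ (eN q) = q := eqQ.symm_apply_apply q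

lemma eQ_inj : Function.Injective eQ := eqQ.symm.injective

/-- earlier indices in `(0,1)` strictly below `eQ n`. -/
noncomputable def pset (n : ℕ) : Finset ℕ :=
  (Finset.range n).filter fun m => 0 < eQ m ∧ eQ m < 1 ∧ eQ m < eQ n

/-- earlier indices in `(0,1)` strictly above `eQ n`. -/
noncomputable def nset (n : ℕ) : Finset ℕ :=
  (Finset.range n).filter fun m => 0 < eQ m ∧ eQ m < 1 ∧ eQ n < eQ m

noncomputable def maxIdx (s : Finset ℕ) : ℕ :=
  if h : s.Nonempty then (s.exists_max_image eQ h).choose else 0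

lemma maxIdx_spec {s : Finset ℕ} (h : s.Nonempty) :
    maxIdx s ∈ s ∧ ∀ m ∈ s, eQ m ≤ eQ (maxIdx s) := by
  rw [maxIdx, dif_pos h]
  obtain ⟨h1, h2⟩ := (s.exists_max_image eQ h).choose_spec
  exact ⟨h1, h2⟩

noncomputable def minIdx (s : Finset ℕ) : ℕ :=
  if h : s.Nonempty then (s.exists_min_image eQ h).choose else 0

lemma minIdx_spec {s : Finset ℕ} (h : s.Nonempty) :
    minIdx s ∈ s ∧ ∀ m ∈ s, eQ (minIdx s) ≤ eQ m := by
  rw [minIdx, dif_pos h]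
  obtain ⟨h1, h2⟩ := (s.exists_min_image eQ h).choose_spec
  exact ⟨h1, h2⟩

variable (b a : L)

noncomputable def newval (g : ℕ → L) (n : ℕ) : L :=
  CBinterp hAN (if (pset n).Nonempty then g (maxIdx (pset n)) else b)
    (if (nset n).Nonempty then g (minIdx (nset n)) else a)

noncomputable def Fam : ℕ → ℕ → L
  | 0 => fun _ => b
  | (n+1) => fun m => if m = n then newval hAN b a (Fam n) n else Fam n m

noncomputable def wv (n : ℕ) : L := Fam hAN b a (n+1) n

lemma Fam_eq : ∀ n m, m < n → Fam hAN b a n m = wv hAN b a m := by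
  intro n
  induction n with
  | zero => intro m hm; omega
  | succ n ih =>
    intro m hm
    by_cases h : m = n
    · subst h; rfl
    · have hm' : m < n := by omega
      show (if m = n then _ else Fam hAN b a n m) = _
      rw [if_neg h, ih m hm']

lemma wv_def (n : ℕ) :
    wv hAN b a n =
      CBinterp hAN (if (pset n).Nonempty then wv hAN b a (maxIdx (pset n)) else b)
        (if (nset n).Nonempty then wv hAN b a (minIdx (nset n)) else a) := by
  have h0 : wv hAN b a n = newval hAN b a (Fam hAN b a n) n := by
    show (if n = n then _ else _) = _
    rw [if_pos rfl]
  rw [h0, newval]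
  congr 1
  · split_ifs with h
    · exact Fam_eq hAN b a n _ (Finset.mem_range.mp (Finset.mem_filter.mp (maxIdx_spec h).1).1)
    · rfl
  · split_ifs with h
    · exact Fam_eq hAN b a n _ (Finset.mem_range.mp (Finset.mem_filter.mp (minIdx_spec h).1).1)
    · rfl

def Good (n : ℕ) : Prop :=
  ∀ m, m < n → 0 < eQ m → eQ m < 1 →
    bᶜ ⊔ wv hAN b a m = ⊤ ∧ (wv hAN b a m)ᶜ ⊔ a = ⊤ ∧
      ∀ m', m' < n → 0 < eQ m' → eQ m' < 1 → eQ m < eQ m' →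
        (wv hAN b a m)ᶜ ⊔ wv hAN b a m' = ⊤

lemma good_all (hba : bᶜ ⊔ a = ⊤) : ∀ n, Good hAN b a n := by
  intro n
  induction n with
  | zero => intro m hm; omega
  | succ n ih =>
    -- facts about indices in pset/nset
    have hpmem : ∀ m ∈ pset n, m < n ∧ 0 < eQ m ∧ eQ m < 1 ∧ eQ m < eQ n := by
      intro m hm
      obtain ⟨h1, h2⟩ := Finset.mem_filter.mp hm
      exact ⟨Finset.mem_range.mp h1, h2⟩
    have hnmem : ∀ m ∈ nset n, m < n ∧ 0 < eQ m ∧ eQ m < 1 ∧ eQ n < eQ m := by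
      intro m hm
      obtain ⟨h1, h2⟩ := Finset.mem_filter.mp hm
      exact ⟨Finset.mem_range.mp h1, h2⟩
    set u := if (pset n).Nonempty then wv hAN b a (maxIdx (pset n)) else b with hu
    set v := if (nset n).Nonempty then wv hAN b a (minIdx (nset n)) else a with hv
    -- b ≺ u (or u = b), and from each earlier smaller node to u
    have hbu : bᶜ ⊔ u = ⊤ ∨ u = b := by
      rw [hu]; split_ifs with h
      · obtain ⟨hmem, -⟩ := maxIdx_spec h
        obtain ⟨h1, h2, h3, -⟩ := hpmem _ hmem
        exact Or.inl (ih _ h1 h2 h3).1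
      · exact Or.inr rfl
    have hva : vᶜ ⊔ a = ⊤ ∨ v = a := by
      rw [hv]; split_ifs with h
      · obtain ⟨hmem, -⟩ := minIdx_spec h
        obtain ⟨h1, h2, h3, -⟩ := hnmem _ hmem
        exact Or.inl (ih _ h1 h2 h3).2.1
      · exact Or.inr rfl
    have huv : uᶜ ⊔ v = ⊤ := by
      rw [hu, hv]; split_ifs with h1 h2 h2
      · obtain ⟨hmem1, -⟩ := maxIdx_spec h1
        obtain ⟨hmem2, -⟩ := minIdx_spec h2
        obtain ⟨ha1, ha2, ha3, ha4⟩ := hpmem _ hmem1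
        obtain ⟨hb1, hb2, hb3, hb4⟩ := hnmem _ hmem2
        exact (ih _ ha1 ha2 ha3).2.2 _ hb1 hb2 hb3 (ha4.trans hb4)
      · obtain ⟨hmem1, -⟩ := maxIdx_spec h1
        obtain ⟨ha1, ha2, ha3, -⟩ := hpmem _ hmem1
        exact (ih _ ha1 ha2 ha3).2.1
      · obtain ⟨hmem2, -⟩ := minIdx_spec h2
        obtain ⟨hb1, hb2, hb3, -⟩ := hnmem _ hmem2
        exact (ih _ hb1 hb2 hb3).1
      · exact hba
    have hwn : wv hAN b a n = CBinterp hAN u v := by rw [wv_def, hu, hv]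
    obtain ⟨hux, hxv⟩ := CBinterp_spec hAN huv
    rw [← hwn] at hux hxv
    -- b ≺ wv n and wv n ≺ a
    have hbx : bᶜ ⊔ wv hAN b a n = ⊤ := by
      rcases hbu with h | h
      · exact rb_trans h hux
      · have h5 := hux; rw [h] at h5; exact h5
    have hxa : (wv hAN b a n)ᶜ ⊔ a = ⊤ := by
      rcases hva with h | h
      · exact rb_trans hxv h
      · have h5 := hxv; rw [h] at h5; exact h5
    -- from earlier smaller nodes to wv n
    have hmx : ∀ m, m < n → 0 < eQ m → eQ m < 1 → eQ m < eQ n →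
        (wv hAN b a m)ᶜ ⊔ wv hAN b a n = ⊤ := by
      intro m hm1 hm2 hm3 hm4
      have hmem : m ∈ pset n :=
        Finset.mem_filter.mpr ⟨Finset.mem_range.mpr hm1, hm2, hm3, hm4⟩
      have hne : (pset n).Nonempty := ⟨m, hmem⟩
      obtain ⟨hmem0, hmax⟩ := maxIdx_spec hne
      have hum : u = wv hAN b a (maxIdx (pset n)) := by rw [hu, if_pos hne]
      rcases eq_or_lt_of_le (hmax m hmem) with heq | hlt
      · have : m = maxIdx (pset n) := eQ_inj heq
        rw [this, ← hum]; exact hux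
      · obtain ⟨h1, h2, h3, -⟩ := hpmem _ hmem0
        have := (ih _ hm1 hm2 hm3).2.2 _ h1 h2 h3 hlt
        rw [← hum] at this
        exact rb_trans this hux
    have hxm : ∀ m, m < n → 0 < eQ m → eQ m < 1 → eQ n < eQ m →
        (wv hAN b a n)ᶜ ⊔ wv hAN b a m = ⊤ := by
      intro m hm1 hm2 hm3 hm4
      have hmem : m ∈ nset n :=
        Finset.mem_filter.mpr ⟨Finset.mem_range.mpr hm1, hm2, hm3, hm4⟩
      have hne : (nset n).Nonempty := ⟨m, hmem⟩
      obtain ⟨hmem0, hmin⟩ := minIdx_spec hne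
      have hvm : v = wv hAN b a (minIdx (nset n)) := by rw [hv, if_pos hne]
      rcases eq_or_lt_of_le (hmin m hmem) with heq | hlt
      · have : m = minIdx (nset n) := (eQ_inj heq).symm
        rw [this, ← hvm]; exact hxv
      · obtain ⟨h1, h2, h3, -⟩ := hnmem _ hmem0
        have h6 := (ih _ h1 h2 h3).2.2 _ hm1 hm2 hm3 hlt
        have h5 := hxv; rw [hvm] at h5
        exact rb_trans h5 h6
    -- assemble Good (n+1)
    intro m hm hm2 hm3
    by_cases hmn : m = n
    · subst hmn
      refine ⟨hbx, hxa, ?_⟩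
      intro m' hm' hm'2 hm'3 hlt
      by_cases h' : m' = m
      · subst h'; exact absurd hlt (lt_irrefl _)
      · exact hxm m' (by omega) hm'2 hm'3 hlt
    · have hm' : m < n := by omega
      obtain ⟨g1, g2, g3⟩ := ih m hm' hm2 hm3
      refine ⟨g1, g2, ?_⟩
      intro m' hmm' hm'2 hm'3 hlt
      by_cases h' : m' = n
      · subst h'; exact hmx m hm' hm2 hm3 hlt
      · exact g3 m' (by omega) hm'2 hm'3 hlt

end CBaux

/-- In an almost normal frame (one where `≺` interpolates), `b ≺ a` implies `b ≪ a`. -/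
theorem rather_below_eq_completely_below_of_almost_normal {L : Type*} [Order.Frame L]
    (hAN : ∀ a b : L, bᶜ ⊔ a = ⊤ → ∃ x : L, bᶜ ⊔ x = ⊤ ∧ xᶜ ⊔ a = ⊤) :
    ∀ a b : L, bᶜ ⊔ a = ⊤ → CompletelyBelow b a := by
  intro a b hba
  classical
  refine ⟨fun q => if q ≤ 0 then b else if 1 ≤ q then a else wv hAN b a (eN q),
    by norm_num, by norm_num, ?_⟩
  intro p q hp hq hpq
  obtain ⟨hp0, hp1⟩ := hp
  obtain ⟨hq0, hq1⟩ := hq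
  have hgood := good_all hAN b a hba
  dsimp only
  by_cases hple : p ≤ 0
  · rw [if_pos hple]
    by_cases hq1' : 1 ≤ q
    · rw [if_neg (by linarith), if_pos hq1']; exact hba
    · rw [if_neg (by linarith), if_neg hq1']
      have hq0' : 0 < q := lt_of_le_of_lt hp0 hpq
      have h1 := hgood (eN q + 1) (eN q) (by omega)
        (by rw [eQ_encode]; exact hq0') (by rw [eQ_encode]; exact lt_of_not_ge hq1')
      exact h1.1
  · have hp0' : 0 < p := lt_of_not_ge hple
    have hp1' : p < 1 := lt_of_lt_of_le hpq hq1
    rw [if_neg hple, if_neg (not_le.mpr hp1')]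
    by_cases hq1' : 1 ≤ q
    · rw [if_neg (by linarith), if_pos hq1']
      have h1 := hgood (eN p + 1) (eN p) (by omega)
        (by rw [eQ_encode]; exact hp0') (by rw [eQ_encode]; exact hp1')
      exact h1.2.1
    · rw [if_neg (by linarith), if_neg hq1']
      have hq1'' : q < 1 := lt_of_not_ge hq1'
      have hq0' : 0 < q := lt_trans hp0' hpq
      set N := max (eN p) (eN q) + 1 with hN
      have h1 := hgood N (eN p) (by omega)
        (by rw [eQ_encode]; exact hp0') (by rw [eQ_encode]; exact hp1')
      exact h1.2.2 (eN q) (by omega)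
        (by rw [eQ_encode]; exact hq0') (by rw [eQ_encode]; exact hq1'')
        (by rw [eQ_encode, eQ_encode]; exact hpq)
end

section
/- Let M be a subfit frame and f : L → M a localic map with left adjoint h. Then f is closed (f(a ∨ h(b)) = f(a) ∨ b for all a ∈ L, b ∈ M) if and only if for all a ∈ L and b ∈ M, f(a ∨ h(b)) = 1 implies f(a) ∨ b = 1. -/
/-- For a subfit frame `M` and a localic map `f : L → M` with left adjoint `h`,
`f` is closed iff `f (a ⊔ h b) = ⊤` implies `f a ⊔ b = ⊤`. -/
theorem closed_iff_of_subfit {L M : Type*} [Order.Frame L] [Order.Frame M]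
    (hsub : ∀ a b : M, ¬ a ≤ b → ∃ c : M, a ⊔ c = ⊤ ∧ b ⊔ c ≠ ⊤)
    (h : FrameHom M L) (f : L → M) (gc : GaloisConnection h f) :
    (∀ (a : L) (b : M), f (a ⊔ h b) = f a ⊔ b) ↔
    (∀ (a : L) (b : M), f (a ⊔ h b) = ⊤ → f a ⊔ b = ⊤) := by
  constructor
  · intro hc a b hab
    rw [← hc]; exact hab
  · intro H a b
    have hmono := gc.monotone_u
    have hge : f a ⊔ b ≤ f (a ⊔ h b) :=
      sup_le (hmono le_sup_left) ((gc.le_u_l b).trans (hmono le_sup_right))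
    refine le_antisymm ?_ hge
    by_contra hle
    obtain ⟨c, hc1, hc2⟩ := hsub _ _ hle
    have key : f (a ⊔ h (b ⊔ c)) = ⊤ := by
      have : f (a ⊔ h b) ⊔ c ≤ f (a ⊔ h (b ⊔ c)) := by
        refine sup_le (hmono ?_) ((gc.le_u_l c).trans (hmono ?_))
        · exact sup_le_sup_left (gc.monotone_l le_sup_left) a
        · exact le_sup_of_le_right (gc.monotone_l le_sup_right)
      exact top_le_iff.mp (hc1 ▸ this)
    have := H a (b ⊔ c) key
    rw [← sup_assoc] at this
    exact hc2 this
end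

section
/- A frame L is extremally disconnected (a* ∨ a** = 1 for all a ∈ L) if and only if for every pair a, b ∈ L with a ∧ b = 0 there exists a complemented element c with a ≤ c and c ∧ b = 0. -/
/-- A frame is extremally disconnected (`aᶜ ⊔ aᶜᶜ = ⊤` for all `a`) iff any two disjoint
elements can be separated by a complemented element. -/
theorem extremally_disconnected_iff {L : Type*} [Order.Frame L] :
    (∀ a : L, aᶜ ⊔ aᶜᶜ = ⊤) ↔
    (∀ a b : L, a ⊓ b = ⊥ → ∃ c : L, c ⊔ cᶜ = ⊤ ∧ a ≤ c ∧ c ⊓ b = ⊥) := by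
  constructor
  · intro h a b hab
    refine ⟨aᶜᶜ, ?_, le_compl_compl, ?_⟩
    · rw [compl_compl_compl, sup_comm]; exact h a
    · have hb : b ≤ aᶜ := le_compl_iff_disjoint_left.2 (disjoint_iff.2 hab)
      have : aᶜᶜ ⊓ aᶜ = ⊥ := by rw [inf_comm]; exact inf_compl_eq_bot
      exact le_bot_iff.1 ((inf_le_inf_left _ hb).trans this.le)
  · intro h a
    obtain ⟨c, hc, hac, hcb⟩ := h a aᶜ inf_compl_eq_bot
    have h1 : cᶜ ≤ aᶜ := compl_le_compl hac
    have h2 : aᶜ ≤ cᶜ := le_compl_iff_disjoint_left.2 (disjoint_iff.2 hcb)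
    have h3 : cᶜ = aᶜ := le_antisymm h1 h2
    have h4 : c ≤ aᶜᶜ := h3 ▸ le_compl_compl
    refine top_le_iff.1 ?_
    calc ⊤ = c ⊔ cᶜ := hc.symm
    _ ≤ aᶜᶜ ⊔ aᶜ := sup_le_sup h4 h1
    _ = aᶜ ⊔ aᶜᶜ := sup_comm _ _
end

section
/- Let h : M → L be a frame homomorphism with right adjoint f : L → M. Define: f is an SₒTₒλ-map if for all a ∈ M and b ∈ L with h(a) ∧ b = 0 there exists d ∈ M with a ∧ d = 0 and b ≤ h(d). Then f is an SₒTₒλ-map if and only if h is nearly open, i.e., h(a*) = h(a)* for all a ∈ M. -/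
/-- The right adjoint `f` of a frame homomorphism `h : M → L` is an `𝔖ₒ𝔗ₒλ`-map
(whenever `h a ⊓ b = ⊥` there is `d : M` with `a ⊓ d = ⊥` and `b ≤ h d`)
iff `h` is nearly open (`h (aᶜ) = (h a)ᶜ` for all `a`). -/
theorem SoTo_lambda_iff_nearly_open {L M : Type*} [Order.Frame L] [Order.Frame M]
    (h : FrameHom M L) (f : L → M) (gc : GaloisConnection h f) :
    (∀ (a : M) (b : L), h a ⊓ b = ⊥ → ∃ d : M, a ⊓ d = ⊥ ∧ b ≤ h d) ↔
    (∀ a : M, h (aᶜ) = (h a)ᶜ) := by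
  constructor
  · intro H a
    apply le_antisymm
    · rw [le_compl_iff_disjoint_left, disjoint_iff, ← map_inf, inf_compl_self, map_bot]
    · obtain ⟨d, hd1, hd2⟩ := H a (h a)ᶜ (by simp [← disjoint_iff])
      exact hd2.trans (OrderHomClass.mono h (le_compl_iff_disjoint_left.2 (disjoint_iff.2 hd1)))
  · intro H a b hab
    exact ⟨aᶜ, by simp, by rw [H a, le_compl_iff_disjoint_left, disjoint_iff]; exact hab⟩
end

section
/- Let h : M → L be a frame homomorphism. If for all a ∈ M and b ∈ L, h(a) ∧ b* = 0 implies there exists d ∈ L with a ∧ d* = 0 and b* ≤ h(d*), then h is nearly open (h(a*) = h(a)* for all a ∈ M). -/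
/-- If a frame homomorphism `h : M → L` satisfies: whenever `h a ⊓ bᶜ = ⊥` there exists
`d` with `a ⊓ dᶜ = ⊥` and `bᶜ ≤ h (dᶜ)`, then `h` is nearly open. -/
theorem nearly_open_of_SoTro {L M : Type*} [Order.Frame L] [Order.Frame M]
    (h : FrameHom M L)
    (hyp : ∀ (a : M) (b : L), h a ⊓ bᶜ = ⊥ → ∃ d : M, a ⊓ dᶜ = ⊥ ∧ bᶜ ≤ h (dᶜ)) :
    ∀ a : M, h (aᶜ) = (h a)ᶜ := by
  intro a
  apply le_antisymm
  · rw [le_compl_iff_disjoint_left, disjoint_iff, ← map_inf, inf_compl_self, map_bot]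
  · obtain ⟨d, hd1, hd2⟩ := hyp a (h a) (by simp)
    refine hd2.trans (OrderHomClass.mono h ?_)
    rw [le_compl_iff_disjoint_left, disjoint_iff]
    exact hd1
end

section
/- Let h : M → L be a nearly open frame homomorphism with right adjoint f. Then for all a ∈ M and b ∈ L with h(a) ∧ b* = 0, one has a ∧ f(b**)* = 0 and b* ≤ h(f(b**)*). -/
/-- If `h : M → L` is a nearly open frame homomorphism with right adjoint `f`, then for
all `a : M` and `b : L` with `h a ⊓ bᶜ = ⊥`, one has `a ⊓ (f (bᶜᶜ))ᶜ = ⊥` and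
`bᶜ ≤ h ((f (bᶜᶜ))ᶜ)`. -/
theorem nearly_open_SoTro {L M : Type*} [Order.Frame L] [Order.Frame M]
    (h : FrameHom M L) (f : L → M) (gc : GaloisConnection h f)
    (hno : ∀ a : M, h (aᶜ) = (h a)ᶜ) :
    ∀ (a : M) (b : L), h a ⊓ bᶜ = ⊥ →
      a ⊓ (f (bᶜᶜ))ᶜ = ⊥ ∧ bᶜ ≤ h ((f (bᶜᶜ))ᶜ) := by
  intro a b hab
  have h1 : h a ≤ bᶜᶜ := le_compl_iff_disjoint_right.mpr (disjoint_iff.mpr hab)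
  have h2 : a ≤ f (bᶜᶜ) := gc.le_iff_le.mp h1
  constructor
  · exact le_bot_iff.mp (le_trans (inf_le_inf_right _ h2)
      (by simp))
  · rw [hno]
    have h3 : h (f (bᶜᶜ)) ≤ bᶜᶜ := gc.l_u_le _
    calc bᶜ = bᶜᶜᶜ := (compl_compl_compl b).symm
      _ ≤ (h (f (bᶜᶜ)))ᶜ := compl_le_compl h3
end

section
/- Let h : M → L be a frame homomorphism with right adjoint f : L → M, and suppose that for every x ∈ M and every a ∈ L with a ≪ h(x)* there exists b ∈ M with a ≤ h(b) and b ≪ x*. Then the image under f of every complemented element of L is complemented in M: if c ∈ L satisfies c ∨ c* = 1 then f(c) ∨ f(c)* = 1. -/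
/-- If the right adjoint `f` of `h : M → L` satisfies the `𝔖_open β`-map condition
(`a ≪ (h x)ᶜ` implies there is `b` with `a ≤ h b` and `b ≪ xᶜ`), then `f` sends
complemented elements of `L` to complemented elements of `M`. -/
theorem image_of_complemented_is_complemented {L M : Type*} [Order.Frame L] [Order.Frame M]
    (h : FrameHom M L) (f : L → M) (gc : GaloisConnection h f)
    (hyp : ∀ (x : M) (a : L), CompletelyBelow a ((h x)ᶜ) →
      ∃ b : M, a ≤ h b ∧ CompletelyBelow b (xᶜ)) :
    ∀ c : L, c ⊔ cᶜ = ⊤ → f c ⊔ (f c)ᶜ = ⊤ := by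
  intro c hc
  -- `cᶜ` is completely below `(h (f c))ᶜ`
  have hle : cᶜ ≤ (h (f c))ᶜ := compl_anti (gc.l_u_le c)
  have key : CompletelyBelow (cᶜ) ((h (f c))ᶜ) := by
    refine ⟨fun q => if q = 1 then (h (f c))ᶜ else cᶜ, by norm_num, by simp, ?_⟩
    intro p q hp hq hpq
    have hp1 : p ≠ 1 := by
      rintro rfl
      exact absurd hq.2 (not_le.2 hpq)
    simp only [hp1, if_false]
    have h1 : cᶜᶜ ⊔ cᶜ = ⊤ := by
      have : c ≤ cᶜᶜ := le_compl_compl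
      exact top_le_iff.1 (hc ▸ sup_le_sup_right this cᶜ)
    by_cases hq1 : q = 1
    · simp only [hq1, if_true]
      exact top_le_iff.1 (h1 ▸ sup_le_sup_left hle _)
    · simp [hq1, h1]
  obtain ⟨b, hab, hb⟩ := hyp (f c) (cᶜ) key
  -- from `b ≪ (f c)ᶜ` get `bᶜ ⊔ (f c)ᶜ = ⊤`
  obtain ⟨d, hd0, hd1, hd⟩ := hb
  have hbtop : bᶜ ⊔ (f c)ᶜ = ⊤ := by
    have := hd 0 1 (by norm_num) (by norm_num) (by norm_num)
    rwa [hd0, hd1] at this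
  -- `bᶜ ≤ f c`
  have hcc : cᶜᶜ ≤ c := by
    have h2 : cᶜᶜ ⊓ (c ⊔ cᶜ) ≤ c := by
      rw [inf_sup_left]
      exact sup_le inf_le_right (by simp [inf_compl_eq_bot])
    simpa [hc] using h2
  have hbc : bᶜ ≤ f c := by
    refine gc.le_u ?_
    have h3 : h bᶜ ≤ (h b)ᶜ := by
      rw [le_compl_iff_disjoint_right, disjoint_iff]
      rw [← map_inf, compl_inf_eq_bot, map_bot]
    exact h3.trans ((compl_anti hab).trans hcc)
  exact top_le_iff.1 (hbtop ▸ sup_le_sup_right hbc _)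
end
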